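/- Let n be a positive integer and let S be a sequence over the cyclic group C_n of length n − 1. Then S has no nonempty zero-sum subsequence if and only if S = e^{n−1} for some e ∈ C_n that generates C_n. -/

import Mathlib

open Multiset

/-- Prefix sums of a zero-sum-free list are injective and nonzero. -/
lemma zsf_prefix_sums (n : ℕ) (L : List (ZMod n))
    (hS : ¬ ∃ T ≤ (↑L : Multiset (ZMod n)), T ≠ 0 ∧ T.sum = 0) :
    (∀ j k : ℕ, j < L.length → k < L.length →
      (L.take (j+1)).sum = (L.take (k+1)).sum → j = k) ∧
    (∀ k : ℕ, k < L.length → (L.take (k+1)).sum ≠ 0) := by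
  push_neg at hS
  constructor
  · -- injectivity
    have key : ∀ j k : ℕ, j < k → k < L.length →
        (L.take (j+1)).sum ≠ (L.take (k+1)).sum := by
      intro j k hjk hk heq
      set seg := (L.drop (j+1)).take (k - j) with hseg
      have hsplit : L.take (k+1) = L.take (j+1) ++ seg := by
        rw [hseg, ← List.take_add]
        congr 1
        omega
      have hsum : (L.take (k+1)).sum = (L.take (j+1)).sum + seg.sum := by
        rw [hsplit, List.sum_append]
      have hzero : seg.sum = 0 := by
        have := heq
        rw [hsum] at this
        linear_combination -this
      have hle : (↑seg : Multiset (ZMod n)) ≤ ↑L :=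
        ((List.take_sublist _ _).trans (List.drop_sublist _ _)).subperm
      have hne : (↑seg : Multiset (ZMod n)) ≠ 0 := by
        simp only [ne_eq, Multiset.coe_eq_zero]
        intro h
        have : seg.length = 0 := by rw [h]; rfl
        rw [hseg, List.length_take, List.length_drop] at this
        omega
      exact (hS _ hle hne).elim (by simpa using hzero)
    intro j k hj hk heq
    rcases lt_trichotomy j k with h | h | h
    · exact absurd heq (key j k h hk)
    · exact h
    · exact absurd heq.symm (key k j h hj)
  · intro k hk h0
    have hle : (↑(L.take (k+1)) : Multiset (ZMod n)) ≤ ↑L :=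
      (List.take_sublist _ _).subperm
    have hne : (↑(L.take (k+1)) : Multiset (ZMod n)) ≠ 0 := by
      simp only [ne_eq, Multiset.coe_eq_zero]
      intro h
      have : (L.take (k+1)).length = 0 := by rw [h]; rfl
      rw [List.length_take] at this
      omega
    exact (hS _ hle hne) (by simpa using h0)

/-- Forward direction core: any two members of S are equal. -/
lemma zsf_all_eq (n : ℕ) (hn : 2 ≤ n) (S : Multiset (ZMod n)) (hcard : S.card = n - 1)
    (hS : ¬ ∃ T ≤ S, T ≠ 0 ∧ T.sum = 0) :
    ∀ a ∈ S, ∀ b ∈ S.erase a, b = a := by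
  intro a ha b hb
  -- S = a ::ₘ b ::ₘ S''
  have hS1 : S = a ::ₘ S.erase a := (Multiset.cons_erase ha).symm
  have hS2 : S.erase a = b ::ₘ (S.erase a).erase b := (Multiset.cons_erase hb).symm
  obtain ⟨L', hL'⟩ : ∃ L' : List (ZMod n), (↑L' : Multiset (ZMod n)) = (S.erase a).erase b :=
    Quot.induction_on ((S.erase a).erase b) fun l => ⟨l, rfl⟩
  set L : List (ZMod n) := a :: b :: L' with hLdef
  have hLS : (↑L : Multiset (ZMod n)) = S := by
    show ((a :: b :: L' : List (ZMod n)) : Multiset (ZMod n)) = S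
    rw [hS1, hS2, ← hL']
    rfl
  have hlen : L.length = n - 1 := by
    have : (↑L : Multiset (ZMod n)).card = S.card := by rw [hLS]
    simpa [hcard] using this
  rw [← hLS] at hS
  obtain ⟨hinj, hne0⟩ := zsf_prefix_sums n L hS
  -- the prefix sum image has cardinality n-1, so it is all of nonzero elements
  have hnpos : 0 < n := by omega
  haveI : NeZero n := ⟨by omega⟩
  set f : ℕ → ZMod n := fun k => (L.take (k+1)).sum with hf
  have himage : (Finset.range L.length).image f = Finset.univ.erase 0 := by
    apply Finset.eq_of_subset_of_card_le
    · intro x hx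
      simp only [Finset.mem_image, Finset.mem_range] at hx
      obtain ⟨k, hk, rfl⟩ := hx
      exact Finset.mem_erase.mpr ⟨hne0 k hk, Finset.mem_univ _⟩
    · rw [Finset.card_erase_of_mem (Finset.mem_univ _), Finset.card_univ, ZMod.card,
        Finset.card_image_of_injOn, Finset.card_range, hlen]
      intro j hj k hk heq
      exact hinj j k (Finset.mem_range.mp hj) (Finset.mem_range.mp hk) heq
  -- b is nonzero
  have hbne : b ≠ 0 := by
    intro h0
    refine hS ⟨{b}, ?_, by simp, by simp [h0]⟩
    refine Multiset.singleton_le.mpr ?_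
    rw [hLS]
    exact Multiset.mem_of_mem_erase hb
  -- so b is a prefix sum
  have hbmem : b ∈ (Finset.range L.length).image f := by
    rw [himage]
    exact Finset.mem_erase.mpr ⟨hbne, Finset.mem_univ _⟩
  simp only [Finset.mem_image, Finset.mem_range] at hbmem
  obtain ⟨k, hk, hkb⟩ := hbmem
  rcases Nat.eq_zero_or_pos k with rfl | hkpos
  · -- f 0 = a = b
    have : a = b := by simpa [hf, hLdef] using hkb
    exact this.symm
  · -- k ≥ 1 : a + b + (L'.take (k-1)).sum = b, contradiction
    exfalso
    have hsplit : L.take (k+1) = a :: b :: L'.take (k-1) := by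
      rw [hLdef]
      obtain ⟨m, rfl⟩ : ∃ m, k = m + 1 := ⟨k - 1, by omega⟩
      simp [List.take_cons]
    have : a + b + (L'.take (k-1)).sum = b := by
      have := hkb
      rw [hf] at this
      simp only at this
      rw [hsplit] at this
      simpa [add_assoc] using this
    have hzero : a + (L'.take (k-1)).sum = 0 := by linear_combination this
    refine hS ⟨a ::ₘ ↑(L'.take (k-1)), ?_, by simp, by simpa using hzero⟩
    have h1 : (↑(L'.take (k-1)) : Multiset (ZMod n)) ≤ ↑L' := (List.take_sublist _ _).subperm
    calc a ::ₘ (↑(L'.take (k-1)) : Multiset (ZMod n))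
        ≤ a ::ₘ (↑L' : Multiset (ZMod n)) := Multiset.cons_le_cons _ h1
      _ ≤ a ::ₘ b ::ₘ (↑L' : Multiset (ZMod n)) :=
          Multiset.cons_le_cons _ (Multiset.le_cons_self _ _)
      _ = ↑L := rfl


/-- A sequence `S` over `C_n` of length `n - 1` has no nonempty zero-sum
subsequence if and only if `S = e^{n-1}` for a generator `e` of `C_n`. -/
theorem stmt_13 (n : ℕ) (hn : 0 < n) (S : Multiset (ZMod n)) (hcard : S.card = n - 1) :
    (¬ ∃ T ≤ S, T ≠ 0 ∧ T.sum = 0) ↔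
    ∃ e : ZMod n, addOrderOf e = n ∧ S = Multiset.replicate (n - 1) e := by
  haveI : NeZero n := ⟨by omega⟩
  constructor
  · intro hS
    rcases eq_or_lt_of_le (Nat.succ_le_of_lt hn) with h1 | h2
    · -- n = 1
      refine ⟨0, ?_, ?_⟩
      · rw [addOrderOf_zero]; omega
      · have : S.card = 0 := by omega
        rw [Multiset.card_eq_zero] at this
        rw [this]
        have : n - 1 = 0 := by omega
        rw [this, Multiset.replicate_zero]
    · -- n ≥ 2
      have h2' : 2 ≤ n := h2
      obtain ⟨a, ha⟩ : ∃ a, a ∈ S := by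
        apply Multiset.exists_mem_of_ne_zero
        intro h
        rw [h, Multiset.card_zero] at hcard
        omega
      have hall := zsf_all_eq n h2' S hcard hS
      have hrep : S = Multiset.replicate (n-1) a := by
        rw [Multiset.eq_replicate]
        refine ⟨hcard, fun b hb => ?_⟩
        by_cases hba : b = a
        · exact hba
        · exact hall a ha b (Multiset.mem_erase_of_ne hba |>.mpr hb)
      refine ⟨a, ?_, hrep⟩
      have hdvd : addOrderOf a ∣ n := by
        apply addOrderOf_dvd_of_nsmul_eq_zero
        have : (n : ZMod n) = 0 := ZMod.natCast_self n
        rw [nsmul_eq_mul, this, zero_mul]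
      have hpos : 0 < addOrderOf a := by
        apply addOrderOf_pos
      by_contra hne
      have hlt : addOrderOf a < n := lt_of_le_of_ne (Nat.le_of_dvd hn hdvd) hne
      refine hS ⟨Multiset.replicate (addOrderOf a) a, ?_, ?_, ?_⟩
      · rw [hrep]
        exact (Multiset.replicate_le_replicate a).mpr (by omega)
      · have : (Multiset.replicate (addOrderOf a) a).card = addOrderOf a := Multiset.card_replicate _ _
        intro h
        rw [h, Multiset.card_zero] at this
        omega
      · rw [Multiset.sum_replicate]
        exact addOrderOf_nsmul_eq_zero a
  · rintro ⟨e, he, rfl⟩ ⟨T, hT, hT0, hTsum⟩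
    rw [Multiset.le_replicate_iff] at hT
    obtain ⟨k, hk, rfl⟩ := hT
    rw [Multiset.sum_replicate] at hTsum
    have hdvd : n ∣ k := by
      rw [← he]
      exact addOrderOf_dvd_of_nsmul_eq_zero hTsum
    have hk0 : k ≠ 0 := by
      intro h
      rw [h, Multiset.replicate_zero] at hT0
      exact hT0 rfl
    have := Nat.le_of_dvd (Nat.pos_of_ne_zero hk0) hdvd
    omega
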